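/- Let C be a binary linear code of length 13 such that every nonzero codeword has weight 8 or 16. Then dim C ≤ 2. -/

import Mathlib

/-- The weight of a binary codeword: the number of nonzero coordinates. -/
def codeWeight {n : ℕ} (w : Fin n → ZMod 2) : ℕ :=
  (Finset.univ.filter (fun i => w i ≠ 0)).card

lemma key (a b c : ZMod 2) :
    ((Finset.univ.filter fun g : Fin 3 → ZMod 2 => g 0 * a + g 1 * b + g 2 * c ≠ 0)).card ≤ 4 := by
  revert a b c; decide

lemma card7 : ((Finset.univ : Finset (Fin 3 → ZMod 2)).filter (· ≠ 0)).card = 7 := by decide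

/-- A binary linear code of length 13 in which every nonzero codeword has
weight 8 or 16 has dimension at most 2. -/
theorem stmt_1 (C : Submodule (ZMod 2) (Fin 13 → ZMod 2))
    (h : ∀ w ∈ C, w ≠ 0 → codeWeight w ∈ ({8, 16} : Set ℕ)) :
    Module.finrank (ZMod 2) C ≤ 2 := by
  by_contra hlt
  push_neg at hlt
  have hr : (3 : Cardinal) ≤ Module.rank (ZMod 2) C := by
    have h2 := Module.lt_rank_of_lt_finrank (n := 2) hlt
    have h2' : (2 : Cardinal) < Module.rank (ZMod 2) C := by exact_mod_cast h2
    calc (3 : Cardinal) = 2 + 1 := by norm_num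
      _ ≤ Order.succ (2 : Cardinal) := Cardinal.add_one_le_succ 2
      _ ≤ _ := Order.succ_le_of_lt h2'
  obtain ⟨s, hs3, hli⟩ := le_rank_iff_exists_linearIndependent_finset.mp hr
  have hcard : Fintype.card ↥(s : Set C) = 3 := by
    simpa using hs3
  let e : Fin 3 ≃ ↥(s : Set C) := (Fintype.equivFinOfCardEq hcard).symm
  set v : Fin 3 → (Fin 13 → ZMod 2) := fun j => ((e j : C) : Fin 13 → ZMod 2) with hv
  have hvC : ∀ j, v j ∈ C := fun j => (e j : C).2
  have hind : LinearIndependent (ZMod 2) v :=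
    ((hli.comp e e.injective).map' C.subtype C.ker_subtype)
  -- every nonzero combination has weight 8
  have hw8 : ∀ g : Fin 3 → ZMod 2, g ≠ 0 → codeWeight (∑ j, g j • v j) = 8 := by
    intro g hg
    have hmem : (∑ j, g j • v j) ∈ C := Submodule.sum_mem _ fun j _ => C.smul_mem _ (hvC j)
    have hne : (∑ j, g j • v j) ≠ 0 := by
      intro h0
      exact hg (funext fun j => (Fintype.linearIndependent_iff.mp hind g h0) j)
    have hle : codeWeight (∑ j, g j • v j) ≤ 13 := by
      unfold codeWeight
      exact le_trans (Finset.card_filter_le _ _) (by simp)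
    rcases h _ hmem hne with h8 | h16
    · exact h8
    · simp only [Set.mem_singleton_iff] at h16; omega
  set S := (Finset.univ : Finset (Fin 3 → ZMod 2)).filter (· ≠ 0) with hS
  have hsum : ∑ g ∈ S, codeWeight (∑ j, g j • v j) = 56 := by
    rw [Finset.sum_congr rfl fun g hg => hw8 g (by simpa [hS] using hg)]
    simp [hS, Finset.sum_const, card7]
  have hsum2 : ∑ g ∈ S, codeWeight (∑ j, g j • v j) ≤ 52 := by
    have : ∀ g ∈ S, codeWeight (∑ j, g j • v j)
        = ∑ i : Fin 13, if (∑ j, g j • v j) i ≠ 0 then 1 else 0 := by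
      intro g _; rw [codeWeight, Finset.card_filter]
    rw [Finset.sum_congr rfl this, Finset.sum_comm]
    have hbd : ∀ i : Fin 13, (∑ g ∈ S, if (∑ j, g j • v j) i ≠ 0 then 1 else 0) ≤ 4 := by
      intro i
      rw [← Finset.card_filter]
      calc (S.filter fun g => (∑ j, g j • v j) i ≠ 0).card
          ≤ ((Finset.univ : Finset (Fin 3 → ZMod 2)).filter
              fun g => (∑ j, g j • v j) i ≠ 0).card := by
            apply Finset.card_le_card
            intro g hg
            simp only [Finset.mem_filter] at hg ⊢
            exact ⟨Finset.mem_univ _, hg.2⟩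
        _ ≤ 4 := by
            have heq : ((Finset.univ : Finset (Fin 3 → ZMod 2)).filter
                  fun g => (∑ j, g j • v j) i ≠ 0)
                = ((Finset.univ : Finset (Fin 3 → ZMod 2)).filter
                  fun g => g 0 * v 0 i + g 1 * v 1 i + g 2 * v 2 i ≠ 0) :=
              Finset.filter_congr fun g _ => by simp [Fin.sum_univ_three]
            rw [heq]
            exact key (v 0 i) (v 1 i) (v 2 i)
    calc ∑ i : Fin 13, (∑ g ∈ S, if (∑ j, g j • v j) i ≠ 0 then 1 else 0)
        ≤ ∑ _i : Fin 13, 4 := Finset.sum_le_sum fun i _ => hbd i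
      _ = 52 := by simp
  rw [hsum] at hsum2
  norm_num at hsum2
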